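/- For any trajectory of the generalized counter with parameters N and l started at time 0 (so that mode(0) = switch), the state at time N satisfies α(s(N)) = α(s(0)) + 1 modulo (2^l)^N. -/

import Mathlib

/-- The two modes of the counter. -/
inductive Mode : Type
  | rotate : Mode
  | switch : Mode
deriving DecidableEq

/-- `β(x) = x^1·2^0 + x^2·2^1 + ⋯ + x^l·2^(l-1)` (0-indexed: bit `j` has weight `2^j`). -/
def beta {l : ℕ} (x : Fin l → Bool) : ℕ :=
  ∑ j : Fin l, (x j).toNat * 2 ^ (j : ℕ)

/-- Binary increment modulo `2^l`: the unique `y : {0,1}^l` with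
`β(y) = β(x) + 1 mod 2^l`. -/
def binInc {l : ℕ} (x : Fin l → Bool) : Fin l → Bool :=
  fun j => ((beta x + 1) % 2 ^ l).testBit (j : ℕ)

/-- `α(s) = β(s_1)·(2^l)^0 + β(s_2)·(2^l)^1 + ⋯ + β(s_N)·(2^l)^(N-1)`. -/
def alphaGen {N l : ℕ} (s : Fin N → Fin l → Bool) : ℕ :=
  ∑ i : Fin N, beta (s i) * (2 ^ l) ^ (i : ℕ)


lemma geom_aux (B : ℕ) (hB : 1 ≤ B) (k : ℕ) :
    ∑ i ∈ Finset.range k, (B - 1) * B ^ i = B ^ k - 1 := by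
  induction k with
  | zero => simp
  | succ k ih =>
    rw [Finset.sum_range_succ, ih]
    have h1 : 1 ≤ B ^ k := Nat.one_le_pow _ _ hB
    have h3 : (B - 1) * B ^ k = B * B ^ k - B ^ k := by
      rw [Nat.sub_mul, one_mul]
    have h4 : B ^ (k + 1) = B * B ^ k := by ring
    rw [h3, h4]
    have h2 : B ^ k ≤ B * B ^ k := Nat.le_mul_of_pos_left _ hB
    omega

lemma sum_testBit (l : ℕ) : ∀ m : ℕ,
    ∑ j : Fin l, (m.testBit (j : ℕ)).toNat * 2 ^ (j : ℕ) = m % 2 ^ l := by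
  induction l with
  | zero => intro m; simp [Nat.mod_one]
  | succ l ih =>
    intro m
    rw [Fin.sum_univ_succ]
    simp only [Fin.val_zero, pow_zero, mul_one, Fin.val_succ, Nat.testBit_succ]
    have e0 : ∑ j : Fin l, ((m / 2).testBit (j : ℕ)).toNat * 2 ^ ((j : ℕ) + 1)
        = 2 * (m / 2 % 2 ^ l) := by
      rw [← ih (m / 2), Finset.mul_sum]
      exact Finset.sum_congr rfl fun j _ => by ring
    rw [e0]
    have ht0 : (m.testBit 0).toNat = m % 2 := by
      rw [Nat.testBit_zero]
      rcases Nat.mod_two_eq_zero_or_one m with h | h <;> simp [h]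
    have h2 := Nat.div_add_mod (m / 2) (2 ^ l)
    have hb : m / 2 % 2 ^ l < 2 ^ l := Nat.mod_lt _ (by positivity)
    have h3 : 2 ^ (l + 1) * (m / 2 / 2 ^ l) = 2 * (2 ^ l * (m / 2 / 2 ^ l)) := by ring
    have e1 : m = 2 ^ (l + 1) * (m / 2 / 2 ^ l) + (2 * (m / 2 % 2 ^ l) + m % 2) := by
      rw [h3]; omega
    have hlt : 2 * (m / 2 % 2 ^ l) + m % 2 < 2 ^ (l + 1) := by
      have : (2:ℕ) ^ (l + 1) = 2 * 2 ^ l := by ring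
      omega
    have hfin : m % 2 ^ (l + 1) = 2 * (m / 2 % 2 ^ l) + m % 2 := by
      conv_lhs => rw [e1]
      rw [Nat.mul_add_mod, Nat.mod_eq_of_lt hlt]
    omega

lemma two_pow_sum (l : ℕ) : ∑ j : Fin l, 2 ^ (j : ℕ) = 2 ^ l - 1 := by
  rw [Fin.sum_univ_eq_sum_range]
  have := geom_aux 2 (by norm_num) l
  simpa using this

lemma beta_lt {l : ℕ} (x : Fin l → Bool) : beta x < 2 ^ l := by
  have h1 : beta x ≤ ∑ j : Fin l, 2 ^ (j : ℕ) := by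
    apply Finset.sum_le_sum
    intro j _
    calc (x j).toNat * 2 ^ (j : ℕ) ≤ 1 * 2 ^ (j : ℕ) :=
          Nat.mul_le_mul_right _ (Bool.toNat_le (x j))
      _ = 2 ^ (j : ℕ) := one_mul _
  have h2 := two_pow_sum l
  have h3 : 1 ≤ 2 ^ l := Nat.one_le_two_pow
  omega

lemma beta_allTrue (l : ℕ) : beta (fun _ => true : Fin l → Bool) = 2 ^ l - 1 := by
  unfold beta
  simp [two_pow_sum]

lemma eq_allTrue_of_beta {l : ℕ} (x : Fin l → Bool) (h : beta x = 2 ^ l - 1) :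
    x = fun _ => true := by
  by_contra hx
  have hex : ∃ j, x j = false := by
    by_contra h'
    push_neg at h'
    exact hx (funext fun j => by cases hxx : x j with
      | true => rfl
      | false => exact absurd hxx (h' j))
  obtain ⟨j, hj⟩ := hex
  have h0 : (x j).toNat * 2 ^ (j : ℕ) = 0 := by simp [hj]
  have e : beta x = ∑ i ∈ Finset.univ.erase j, (x i).toNat * 2 ^ (i : ℕ) := by
    unfold beta
    exact (Finset.sum_erase (f := fun i : Fin l => (x i).toNat * 2 ^ (i : ℕ)) Finset.univ h0).symm
  have hsum : beta x + 2 ^ (j : ℕ) ≤ ∑ i : Fin l, 2 ^ (i : ℕ) := by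
    rw [e]
    calc (∑ i ∈ Finset.univ.erase j, (x i).toNat * 2 ^ (i : ℕ)) + 2 ^ (j : ℕ)
        ≤ (∑ i ∈ Finset.univ.erase j, 2 ^ (i : ℕ)) + 2 ^ (j : ℕ) := by
          gcongr with i hi
          calc (x i).toNat * 2 ^ (i : ℕ) ≤ 1 * 2 ^ (i : ℕ) :=
                Nat.mul_le_mul_right _ (Bool.toNat_le (x i))
            _ = 2 ^ (i : ℕ) := one_mul _
      _ = ∑ i : Fin l, 2 ^ (i : ℕ) := by
          rw [add_comm]
          exact Finset.add_sum_erase _ (fun i : Fin l => 2 ^ (i : ℕ)) (Finset.mem_univ j)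
  have h2 := two_pow_sum l
  have h3 : 1 ≤ 2 ^ (j : ℕ) := Nat.one_le_two_pow
  omega

lemma beta_binInc {l : ℕ} (x : Fin l → Bool) :
    beta (binInc x) = (beta x + 1) % 2 ^ l := by
  have : beta (binInc x)
      = ∑ j : Fin l, ((((beta x + 1) % 2 ^ l).testBit (j : ℕ)).toNat * 2 ^ (j : ℕ)) := rfl
  rw [this, sum_testBit]
  exact Nat.mod_mod_of_dvd _ dvd_rfl

/-- After `N` steps of the generalized counter with parameters `N` and `l`
(started at time `0`, so that `mode 0 = switch`), the encoded number `α`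
has increased by `1` modulo `(2^l)^N`.  Coordinates are `0`-indexed:
coordinate `i` corresponds to `s_{i+1}` of the paper. -/
theorem stmt3 (N l : ℕ) (hN : 0 < N)
    (s : ℕ → Fin N → Fin l → Bool) (mode : ℕ → Mode)
    -- s_i(t) = s_{i+1}(t-1) for i = 1, ..., N-1
    (hshift : ∀ (t : ℕ) (i : Fin N) (h : (i : ℕ) + 1 < N),
      s (t + 1) i = s t ⟨(i : ℕ) + 1, h⟩)
    -- s_N(t) = Γ(s_1(t-1), mode(t-1)); Γ(x, rotate) = x, Γ(x, switch) = increment mod 2^l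
    (hlast : ∀ t : ℕ, s (t + 1) ⟨N - 1, Nat.sub_lt hN one_pos⟩ =
      (if mode t = Mode.switch then binInc (s t ⟨0, hN⟩) else s t ⟨0, hN⟩))
    -- mode(t) = switch whenever t is a multiple of N
    (hmodeN : ∀ t : ℕ, N ∣ t → mode t = Mode.switch)
    -- otherwise mode(t) = mode(t-1) if s_1(t-1) = (1,…,1), and mode(t) = rotate otherwise
    (hmode : ∀ t : ℕ, ¬ N ∣ (t + 1) →
      mode (t + 1) =
        (if s t ⟨0, hN⟩ = (fun _ => true) then mode t else Mode.rotate)) :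
    alphaGen (s N) % (2 ^ l) ^ N = (alphaGen (s 0) + 1) % (2 ^ l) ^ N := by
  have hB1 : 1 ≤ 2 ^ l := Nat.one_le_two_pow
  -- shift lemma
  have A : ∀ (d t : ℕ) (i : Fin N) (h : (i : ℕ) + d < N), s (t + d) i = s t ⟨(i : ℕ) + d, h⟩ := by
    intro d
    induction d with
    | zero =>
      intro t i h
      have : (⟨(i : ℕ) + 0, h⟩ : Fin N) = i := by ext; simp
      rw [this]
      rfl
    | succ d ih =>
      intro t i h
      have h1 : (i : ℕ) + 1 < N := by omega
      have e2 : s (t + d + 1) i = s (t + d) ⟨(i : ℕ) + 1, h1⟩ := hshift (t + d) i h1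
      have h2 : ((⟨(i : ℕ) + 1, h1⟩ : Fin N) : ℕ) + d < N := by simp; omega
      have e3 := ih t ⟨(i : ℕ) + 1, h1⟩ h2
      have h3 : (⟨((⟨(i : ℕ) + 1, h1⟩ : Fin N) : ℕ) + d, h2⟩ : Fin N) = ⟨(i : ℕ) + (d + 1), h⟩ := by
        ext; simp; omega
      rw [show t + (d + 1) = t + d + 1 from rfl, e2, e3, h3]
  have s0t : ∀ (t : ℕ) (h : t < N), s t ⟨0, hN⟩ = s 0 ⟨t, h⟩ := by
    intro t h
    have h' : ((⟨0, hN⟩ : Fin N) : ℕ) + t < N := by simpa using h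
    have := A t 0 ⟨0, hN⟩ h'
    simpa using this
  -- value at time N
  have sNe : ∀ i : Fin N, s N i =
      if mode (i : ℕ) = Mode.switch then binInc (s 0 i) else s 0 i := by
    intro i
    have hi := i.isLt
    have h1 : (i : ℕ) + (N - 1 - (i : ℕ)) < N := by omega
    have h2 : ((i : ℕ) + 1) + (N - 1 - (i : ℕ)) = N := by omega
    have e1 : s N i = s ((i : ℕ) + 1) ⟨(i : ℕ) + (N - 1 - (i : ℕ)), h1⟩ := by
      have := A (N - 1 - (i : ℕ)) ((i : ℕ) + 1) i h1
      rwa [h2] at this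
    have e2 : (⟨(i : ℕ) + (N - 1 - (i : ℕ)), h1⟩ : Fin N) = ⟨N - 1, Nat.sub_lt hN one_pos⟩ := by
      ext; simp; omega
    rw [e1, e2, hlast (i : ℕ), s0t (i : ℕ) hi]
  -- mode lemmas
  have mswitch : ∀ t : ℕ, ∀ ht : t < N,
      (∀ τ (hτ : τ < t), s 0 ⟨τ, hτ.trans ht⟩ = fun _ => true) → mode t = Mode.switch := by
    intro t
    induction t with
    | zero => intro _ _; exact hmodeN 0 (dvd_zero N)
    | succ t ih =>
      intro ht hall
      have hnd : ¬ N ∣ (t + 1) := fun hd => by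
        have := Nat.le_of_dvd (Nat.succ_pos t) hd; omega
      rw [hmode t hnd]
      have ht' : t < N := by omega
      have h0 : s t ⟨0, hN⟩ = fun _ => true := by
        rw [s0t t ht']
        exact hall t (Nat.lt_succ_self t)
      rw [if_pos h0]
      exact ih ht' (fun τ hτ => hall τ (by omega))
  have mrotate : ∀ t : ℕ, ∀ ht : t < N, ∀ τ (hτ : τ < t),
      s 0 ⟨τ, hτ.trans ht⟩ ≠ (fun _ => true) → mode t = Mode.rotate := by
    intro t
    induction t with
    | zero => intro _ τ hτ; exact absurd hτ (Nat.not_lt_zero τ)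
    | succ t ih =>
      intro ht τ hτ hne
      have hnd : ¬ N ∣ (t + 1) := fun hd => by
        have := Nat.le_of_dvd (Nat.succ_pos t) hd; omega
      rw [hmode t hnd]
      have ht' : t < N := by omega
      by_cases h0 : s t ⟨0, hN⟩ = fun _ => true
      · rw [if_pos h0]
        have hst : s 0 ⟨t, ht'⟩ = fun _ => true := by rw [← s0t t ht']; exact h0
        have hτt : τ < t := by
          rcases Nat.lt_succ_iff_lt_or_eq.mp hτ with h | h
          · exact h
          · subst h; exact absurd hst hne
        exact ih ht' τ hτt hne
      · rw [if_neg h0]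
  -- beta of incremented all-true block is 0
  have hz : beta (binInc (fun _ => true : Fin l → Bool)) = 0 := by
    rw [beta_binInc, beta_allTrue, Nat.sub_add_cancel hB1, Nat.mod_self]
  by_cases hall : ∀ i : Fin N, s 0 i = fun _ => true
  · -- all coordinates all-true
    have hβN : ∀ i : Fin N, beta (s N i) = 0 := by
      intro i
      rw [sNe i, if_pos (mswitch (i : ℕ) i.isLt (fun τ hτ => hall _)), hall i, hz]
    have hN0 : alphaGen (s N) = 0 := by
      unfold alphaGen
      exact Finset.sum_eq_zero fun i _ => by rw [hβN i, zero_mul]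
    have hA0 : alphaGen (s 0) = (2 ^ l) ^ N - 1 := by
      unfold alphaGen
      have : ∀ i : Fin N, beta (s 0 i) * (2 ^ l) ^ (i : ℕ)
          = (2 ^ l - 1) * (2 ^ l) ^ (i : ℕ) := fun i => by rw [hall i, beta_allTrue]
      rw [Finset.sum_congr rfl fun i _ => this i,
        Fin.sum_univ_eq_sum_range (fun n => (2 ^ l - 1) * (2 ^ l) ^ n) N,
        geom_aux (2 ^ l) hB1 N]
    rw [hN0, hA0, Nat.sub_add_cancel (Nat.one_le_pow _ _ (by omega)), Nat.mod_self,
      Nat.zero_mod]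
  · -- there is a non-all-true coordinate
    push_neg at hall
    obtain ⟨i₀, hi₀⟩ := hall
    set T : Finset (Fin N) := Finset.univ.filter (fun i => s 0 i ≠ fun _ => true) with hT
    have hTne : T.Nonempty := ⟨i₀, by simp [hT, hi₀]⟩
    set k : Fin N := T.min' hTne with hkdef
    have hk : s 0 k ≠ fun _ => true := by
      have := T.min'_mem hTne
      simp [hT] at this
      exact this
    have hklt : ∀ i : Fin N, i < k → s 0 i = fun _ => true := by
      intro i hi
      by_contra hne
      have : k ≤ i := T.min'_le i (by simp [hT, hne])
      exact absurd hi (not_lt.mpr this)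
    have hkN : (k : ℕ) < N := k.isLt
    -- earlier entries as naturals
    have hkltn : ∀ (τ : ℕ) (h : τ < N), τ < (k : ℕ) → s 0 ⟨τ, h⟩ = fun _ => true := by
      intro τ h hτ
      exact hklt ⟨τ, h⟩ (Fin.lt_def.mpr hτ)
    -- digit values
    have dig_lt : ∀ i : Fin N, (i : ℕ) < (k : ℕ) → beta (s N i) = 0 := by
      intro i hi
      have hmode_i : mode (i : ℕ) = Mode.switch :=
        mswitch (i : ℕ) i.isLt (fun τ hτ => hkltn τ _ (by omega))
      rw [sNe i, if_pos hmode_i, hklt i (Fin.lt_def.mpr hi), hz]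
    have dig_k : beta (s N k) = beta (s 0 k) + 1 := by
      have hmode_k : mode (k : ℕ) = Mode.switch :=
        mswitch (k : ℕ) k.isLt (fun τ hτ => hkltn τ _ hτ)
      rw [sNe k, if_pos hmode_k, beta_binInc]
      apply Nat.mod_eq_of_lt
      have h1 : beta (s 0 k) < 2 ^ l := beta_lt _
      have h2 : beta (s 0 k) ≠ 2 ^ l - 1 := fun h => hk (eq_allTrue_of_beta _ h)
      omega
    have dig_gt : ∀ i : Fin N, (k : ℕ) < (i : ℕ) → beta (s N i) = beta (s 0 i) := by
      intro i hi
      have hk' : s 0 ⟨(k : ℕ), hkN.trans_le (le_refl N)⟩ ≠ (fun _ => true) := hk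
      have hmode_i : mode (i : ℕ) = Mode.rotate :=
        mrotate (i : ℕ) i.isLt (k : ℕ) hi hk'
      rw [sNe i, hmode_i]
      simp
    -- sums over range
    set B := 2 ^ l with hBdef
    set F : ℕ → ℕ := fun n => if h : n < N then beta (s N ⟨n, h⟩) * B ^ n else 0 with hF
    set G : ℕ → ℕ := fun n => if h : n < N then beta (s 0 ⟨n, h⟩) * B ^ n else 0 with hG
    have hFA : alphaGen (s N) = ∑ i ∈ Finset.range N, F i := by
      rw [← Fin.sum_univ_eq_sum_range F N]
      unfold alphaGen
      exact Finset.sum_congr rfl fun i _ => by simp [hF, i.isLt, hBdef]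
    have hGA : alphaGen (s 0) = ∑ i ∈ Finset.range N, G i := by
      rw [← Fin.sum_univ_eq_sum_range G N]
      unfold alphaGen
      exact Finset.sum_congr rfl fun i _ => by simp [hG, i.isLt, hBdef]
    have hsplitF : ∑ i ∈ Finset.range N, F i
        = (∑ i ∈ Finset.range ((k : ℕ) + 1), F i) + ∑ i ∈ Finset.Ico ((k : ℕ) + 1) N, F i := by
      rw [Finset.range_eq_Ico, ← Finset.sum_Ico_consecutive F (Nat.zero_le ((k : ℕ) + 1)) hkN,
        ← Finset.range_eq_Ico]
    have hsplitG : ∑ i ∈ Finset.range N, G i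
        = (∑ i ∈ Finset.range ((k : ℕ) + 1), G i) + ∑ i ∈ Finset.Ico ((k : ℕ) + 1) N, G i := by
      rw [Finset.range_eq_Ico, ← Finset.sum_Ico_consecutive G (Nat.zero_le ((k : ℕ) + 1)) hkN,
        ← Finset.range_eq_Ico]
    have htail : ∑ i ∈ Finset.Ico ((k : ℕ) + 1) N, F i = ∑ i ∈ Finset.Ico ((k : ℕ) + 1) N, G i := by
      apply Finset.sum_congr rfl
      intro i hi
      rw [Finset.mem_Ico] at hi
      have h1 : i < N := hi.2
      simp only [hF, hG, dif_pos h1]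
      rw [dig_gt ⟨i, h1⟩ (show (k:ℕ) < i by omega)]
    have hheadF : ∑ i ∈ Finset.range ((k : ℕ) + 1), F i = (beta (s 0 k) + 1) * B ^ (k : ℕ) := by
      rw [Finset.sum_range_succ]
      have hz' : ∑ i ∈ Finset.range (k : ℕ), F i = 0 := by
        apply Finset.sum_eq_zero
        intro i hi
        rw [Finset.mem_range] at hi
        have h1 : i < N := by omega
        simp only [hF, dif_pos h1]
        rw [dig_lt ⟨i, h1⟩ (show (i:ℕ) < (k:ℕ) from hi), zero_mul]
      rw [hz']
      simp only [hF, dif_pos hkN]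
      rw [show (⟨(k : ℕ), hkN⟩ : Fin N) = k from rfl, dig_k, zero_add]
    have hheadG : ∑ i ∈ Finset.range ((k : ℕ) + 1), G i = (B ^ (k : ℕ) - 1) + beta (s 0 k) * B ^ (k : ℕ) := by
      rw [Finset.sum_range_succ]
      have hg : ∑ i ∈ Finset.range (k : ℕ), G i = B ^ (k : ℕ) - 1 := by
        rw [← geom_aux B hB1 (k : ℕ)]
        apply Finset.sum_congr rfl
        intro i hi
        rw [Finset.mem_range] at hi
        have h1 : i < N := by omega
        simp only [hG, dif_pos h1]
        rw [hkltn i h1 hi, beta_allTrue]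
      rw [hg]
      simp only [hG, dif_pos hkN]
    have hBk1 : 1 ≤ B ^ (k : ℕ) := Nat.one_le_pow _ _ (by omega)
    have hkey : alphaGen (s N) = alphaGen (s 0) + 1 := by
      rw [hFA, hGA, hsplitF, hsplitG, htail, hheadF, hheadG]
      have : (beta (s 0 k) + 1) * B ^ (k : ℕ) = beta (s 0 k) * B ^ (k : ℕ) + B ^ (k : ℕ) := by ring
      omega
    rw [hkey]
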